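/- Let B be a convergent square substochastic matrix that is block upper triangular with square diagonal blocks B_11, B_22, …, B_rr of orders n_1, …, n_r, each block being either irreducible or a 1×1 zero matrix. Then max_i ĉon B_ii ≤ ĉon B ≤ N + ĉon B_rr, where N := n_1 + ⋯ + n_{r−1} (with N = 0 when r = 1). -/

import Mathlib

open Matrix Filter Finset

/-- A substochastic matrix: nonnegative entries, row sums at most one. -/
def IsSubstochastic {m n : Type*} [Fintype n] (B : Matrix m n ℝ) : Prop :=
  (∀ i j, 0 ≤ B i j) ∧ ∀ i, ∑ j, B i j ≤ 1

/-- Ĵ(B): the set of rows with row-sum strictly less than one. -/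
def Jhat {m n : Type*} [Fintype n] (B : Matrix m n ℝ) : Set m :=
  {i | ∑ j, B i j < 1}

/-- There is a walk of length `ℓ` (a nonempty sequence of `ℓ` consecutive edges) in the
digraph of `A` (edge `i → j` iff `A i j ≠ 0`) starting at `i` and ending in `S`. -/
def IsWalkTo {V : Type*} (A : Matrix V V ℝ) (i : V) (S : Set V) (ℓ : ℕ) : Prop :=
  1 ≤ ℓ ∧ ∃ w : ℕ → V, w 0 = i ∧ (∀ k < ℓ, A (w k) (w (k + 1)) ≠ 0) ∧ w ℓ ∈ S

/-- The index of contraction `ĉon B ∈ ℕ∞`: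
`max(0, sup_{i ∉ Ĵ(B)} inf_{p ∈ P̂ᵢ(B)} |p|)` with `inf ∅ = ∞`, `sup ∅ = -∞`
(in `ℕ∞` the empty supremum is `0`, matching `max(0, -∞) = 0`). -/
noncomputable def conHat {V : Type*} [Fintype V] (B : Matrix V V ℝ) : ℕ∞ :=
  ⨆ i ∈ (Jhat B)ᶜ, ⨅ ℓ ∈ {ℓ : ℕ | IsWalkTo B i (Jhat B) ℓ}, (ℓ : ℕ∞)

/-- The maximum absolute row-sum norm `‖·‖_∞`. -/
noncomputable def rowSumNorm {m n : Type*} [Fintype n] (B : Matrix m n ℝ) : ℝ :=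
  ⨆ i, ∑ j, |B i j|

/-- `B` is convergent: `Bᵏ → 0` as `k → ∞`. -/
def IsConvergent {V : Type*} [Fintype V] [DecidableEq V] (B : Matrix V V ℝ) : Prop :=
  Tendsto (fun k : ℕ => B ^ k) atTop (nhds 0)

/-- `B` is irreducible: its digraph is strongly connected, i.e. for every pair of
vertices `i, j` there is a walk from `i` to `j`. -/
def IsIrreducibleMat {V : Type*} (B : Matrix V V ℝ) : Prop :=
  ∀ i j : V, ∃ ℓ : ℕ, 1 ≤ ℓ ∧
    ∃ w : ℕ → V, w 0 = i ∧ w ℓ = j ∧ ∀ k < ℓ, B (w k) (w (k + 1)) ≠ 0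

/-- The `i`-th diagonal block of a matrix indexed by `Σ i, Fin (nsz i)`. -/
def diagBlock {r : ℕ} {nsz : Fin r → ℕ}
    (M : Matrix (Σ i, Fin (nsz i)) (Σ i, Fin (nsz i)) ℝ) (i : Fin r) :
    Matrix (Fin (nsz i)) (Fin (nsz i)) ℝ :=
  Matrix.of fun a b => M ⟨i, a⟩ ⟨i, b⟩

section WalkLemmas
variable {V : Type*}

lemma walk_append (A : Matrix V V ℝ) {i j : V} {S : Set V} {e f : ℕ}
    (w1 : ℕ → V) (h10 : w1 0 = i) (h1e : w1 e = j)
    (hw1 : ∀ k < e, A (w1 k) (w1 (k + 1)) ≠ 0)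
    (h2 : IsWalkTo A j S f) : IsWalkTo A i S (e + f) := by
  obtain ⟨hf1, w2, h20, hw2, h2S⟩ := h2
  refine ⟨by omega, fun k => if k < e then w1 k else w2 (k - e), ?_, ?_, ?_⟩
  · by_cases h0 : 0 < e
    · simpa [h0] using h10
    · have : e = 0 := by omega
      subst this
      simpa [h20] using (h1e.symm.trans h10)
  · intro k hk
    rcases lt_trichotomy (k + 1) e with h | h | h
    · have hke : k < e := by omega
      simpa [hke, h] using hw1 k hke
    · have hke : k < e := by omega
      have : w2 (k + 1 - e) = w1 (k + 1) := by
        rw [show k + 1 - e = 0 from by omega, h20, ← h1e, ← h]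
      simp only [if_pos hke, if_neg (by omega : ¬ k + 1 < e), this]
      exact hw1 k hke
    · have hke : ¬ k < e := by omega
      have h1 : k + 1 - e = (k - e) + 1 := by omega
      simp only [if_neg hke, if_neg (by omega : ¬ k + 1 < e), h1]
      exact hw2 (k - e) (by omega)
  · have : ¬ e + f < e := by omega
    simp only [if_neg this, show e + f - e = f from by omega]
    exact h2S

lemma walk_splice (A : Matrix V V ℝ) {S : Set V} {ℓ : ℕ} {w : ℕ → V}
    (hw : ∀ k < ℓ, A (w k) (w (k + 1)) ≠ 0) (hend : w ℓ ∈ S)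
    {s t : ℕ} (hst : s < t) (htl : t ≤ ℓ) (heq : w s = w t) :
    ∃ w' : ℕ → V, w' 0 = w 0 ∧ (∀ k < ℓ - (t - s), A (w' k) (w' (k + 1)) ≠ 0) ∧
      w' (ℓ - (t - s)) ∈ S := by
  refine ⟨fun k => if k < s then w k else w (k + (t - s)), ?_, ?_, ?_⟩
  · by_cases h0 : 0 < s
    · simp [h0]
    · have hs : s = 0 := by omega
      subst hs
      simp only [if_neg (lt_irrefl 0), Nat.zero_add, Nat.sub_zero]
      exact heq.symm
  · intro k hk
    by_cases hks : k + 1 ≤ s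
    · have hk1 : k < s := by omega
      have hx : (if k + 1 < s then w (k + 1) else w (k + 1 + (t - s))) = w (k + 1) := by
        by_cases h2 : k + 1 < s
        · simp [h2]
        · have hk1s : k + 1 = s := by omega
          simp only [if_neg h2]
          rw [show k + 1 + (t - s) = t from by omega, ← heq, hk1s]
      simp only [if_pos hk1, hx]
      exact hw k (by omega)
    · have hk1 : ¬ k < s := by omega
      have h2 : ¬ k + 1 < s := by omega
      simp only [if_neg hk1, if_neg h2, show k + 1 + (t - s) = (k + (t - s)) + 1 from by omega]
      exact hw (k + (t - s)) (by omega)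
  · have h1 : ¬ ℓ - (t - s) < s := by omega
    simp only [if_neg h1, show ℓ - (t - s) + (t - s) = ℓ from by omega]
    exact hend

lemma walk_shorten [Fintype V] (A : Matrix V V ℝ) {i : V} {S : Set V} (hi : i ∉ S) :
    ∀ ℓ : ℕ, IsWalkTo A i S ℓ → ∃ ℓ' ≤ Fintype.card V - 1, IsWalkTo A i S ℓ' := by
  intro ℓ
  induction ℓ using Nat.strong_induction_on with
  | _ ℓ IH =>
    intro h
    by_cases hcard : ℓ ≤ Fintype.card V - 1
    · exact ⟨ℓ, hcard, h⟩
    obtain ⟨h1, w, hw0, hwe, hwS⟩ := h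
    have hlt : Fintype.card V < Fintype.card (Fin (ℓ + 1)) := by
      have : Nonempty V := ⟨i⟩
      have := Fintype.card_pos (α := V)
      simp only [Fintype.card_fin]
      omega
    obtain ⟨s, t, hst, heq⟩ :=
      Fintype.exists_ne_map_eq_of_card_lt (fun k : Fin (ℓ + 1) => w k) hlt
    obtain ⟨s', t', hst', heq'⟩ : ∃ s' t' : ℕ, s' < t' ∧ t' ≤ ℓ ∧ w s' = w t' := by
      rcases lt_or_gt_of_ne hst with h | h
      · exact ⟨s, t, h, by omega, heq⟩
      · exact ⟨t, s, h, by omega, heq.symm⟩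
    obtain ⟨htl, heqw⟩ := heq'
    obtain ⟨w', hw'0, hw'e, hw'S⟩ := walk_splice A hwe hwS hst' htl heqw
    have hpos : 1 ≤ ℓ - (t' - s') := by
      by_contra hz
      obtain ⟨ht, hs⟩ : t' = ℓ ∧ s' = 0 := by omega
      subst ht; subst hs
      rw [hw0] at heqw
      exact hi (heqw ▸ hwS)
    have hlt2 : ℓ - (t' - s') < ℓ := by omega
    exact IH _ hlt2 ⟨hpos, w', hw'0.trans hw0, hw'e, hw'S⟩

end WalkLemmas

section Blocks
variable {r : ℕ} {nsz : Fin (r + 1) → ℕ}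
  (M : Matrix (Σ i, Fin (nsz i)) (Σ i, Fin (nsz i)) ℝ)

lemma rowsum_split (u : Σ i, Fin (nsz i)) :
    ∑ v, M u v = ∑ j, ∑ b, M u ⟨j, b⟩ := by
  rw [← Finset.univ_sigma_univ, Finset.sum_sigma]

lemma pow_tri (htri : ∀ a b : Σ i, Fin (nsz i), b.1 < a.1 → M a b = 0) (k : ℕ) :
    ∀ a b, b.1 < a.1 → (M ^ k) a b = 0 := by
  induction k with
  | zero =>
    intro a b h
    rw [pow_zero]
    exact Matrix.one_apply_ne (fun hab => absurd h (by rw [hab]; exact lt_irrefl _))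
  | succ k IH =>
    intro a b h
    rw [pow_succ, Matrix.mul_apply]
    apply Finset.sum_eq_zero
    intro c _
    rcases lt_or_ge c.1 a.1 with hc | hc
    · rw [IH a c hc, zero_mul]
    · rw [htri c b (lt_of_lt_of_le h hc), mul_zero]

lemma pow_block (htri : ∀ a b : Σ i, Fin (nsz i), b.1 < a.1 → M a b = 0)
    (i : Fin (r + 1)) (k : ℕ) :
    ∀ a b, (M ^ k) ⟨i, a⟩ ⟨i, b⟩ = ((diagBlock M i) ^ k) a b := by
  induction k with
  | zero =>
    intro a b
    rw [pow_zero, pow_zero]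
    by_cases hab : a = b
    · subst hab; rw [Matrix.one_apply_eq, Matrix.one_apply_eq]
    · have hne : (⟨i, a⟩ : Σ j, Fin (nsz j)) ≠ ⟨i, b⟩ :=
        fun h => hab (eq_of_heq (Sigma.mk.inj_iff.mp h).2)
      rw [Matrix.one_apply_ne hne, Matrix.one_apply_ne hab]
  | succ k IH =>
    intro a b
    rw [pow_succ, pow_succ, Matrix.mul_apply, Matrix.mul_apply,
      ← Finset.univ_sigma_univ, Finset.sum_sigma]
    refine (Finset.sum_eq_single i (fun j _ hj => ?_) (by simp)).trans ?_
    · apply Finset.sum_eq_zero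
      intro c _
      rcases lt_or_gt_of_ne hj with h | h
      · rw [pow_tri M htri k _ _ h, zero_mul]
      · rw [htri _ _ h, mul_zero]
    · apply Finset.sum_congr rfl
      intro c _
      rw [IH a c]
      rfl

lemma block_rowsum_le (hM : IsSubstochastic M) (i : Fin (r + 1)) (a : Fin (nsz i)) :
    ∑ b, diagBlock M i a b ≤ ∑ v, M ⟨i, a⟩ v := by
  rw [rowsum_split]
  exact Finset.single_le_sum (f := fun j => ∑ b, M ⟨i, a⟩ ⟨j, b⟩)
    (fun j _ => Finset.sum_nonneg fun b _ => hM.1 _ _) (Finset.mem_univ i)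

lemma notJ_offblock (hM : IsSubstochastic M) {i : Fin (r + 1)} {a : Fin (nsz i)}
    (h : a ∉ Jhat (diagBlock M i)) :
    (∑ v, M ⟨i, a⟩ v = 1) ∧ ∀ v : Σ j, Fin (nsz j), v.1 ≠ i → M ⟨i, a⟩ v = 0 := by
  have hb1 : (1 : ℝ) ≤ ∑ b, diagBlock M i a b := not_lt.mp h
  have htot : ∑ v, M ⟨i, a⟩ v ≤ 1 := hM.2 _
  have hle := block_rowsum_le M hM i a
  have htot1 : ∑ v, M ⟨i, a⟩ v = 1 := le_antisymm htot (le_trans hb1 hle)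
  refine ⟨htot1, ?_⟩
  have hfnn : ∀ j, (0:ℝ) ≤ ∑ b, M ⟨i, a⟩ ⟨j, b⟩ :=
    fun j => Finset.sum_nonneg fun b _ => hM.1 _ _
  have hsplit := (rowsum_split M ⟨i, a⟩).symm.trans htot1
  have hadd := Finset.add_sum_erase Finset.univ
    (fun j => ∑ b, M ⟨i, a⟩ ⟨j, b⟩) (Finset.mem_univ i)
  have herase : ∑ j ∈ Finset.univ.erase i, (∑ b, M ⟨i, a⟩ ⟨j, b⟩) = 0 := by
    have hnn : (0:ℝ) ≤ ∑ j ∈ Finset.univ.erase i, (∑ b, M ⟨i, a⟩ ⟨j, b⟩) :=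
      Finset.sum_nonneg fun j _ => hfnn j
    have hb1' : (1:ℝ) ≤ ∑ b, M ⟨i, a⟩ ⟨i, b⟩ := hb1
    linarith [hadd.trans hsplit]
  intro v hv
  obtain ⟨j, b⟩ := v
  have hj : (∑ b, M ⟨i, a⟩ ⟨j, b⟩) = 0 :=
    (Finset.sum_eq_zero_iff_of_nonneg (fun j _ => hfnn j)).mp herase j
      (Finset.mem_erase.mpr ⟨hv, Finset.mem_univ _⟩)
  exact (Finset.sum_eq_zero_iff_of_nonneg (fun b _ => hM.1 _ _)).mp hj b (Finset.mem_univ b)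

lemma last_rowsum (htri : ∀ a b : Σ i, Fin (nsz i), b.1 < a.1 → M a b = 0)
    (a : Fin (nsz (Fin.last r))) :
    ∑ v, M ⟨Fin.last r, a⟩ v = ∑ b, diagBlock M (Fin.last r) a b := by
  rw [rowsum_split]
  exact Finset.sum_eq_single (Fin.last r)
    (fun j _ hj => Finset.sum_eq_zero fun b _ => htri _ _ ((Fin.le_last j).lt_of_ne hj))
    (by simp)

lemma jhat_block_nonempty (hM : IsSubstochastic M) (hnsz : ∀ i, 0 < nsz i)
    (htri : ∀ a b : Σ i, Fin (nsz i), b.1 < a.1 → M a b = 0)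
    (hconv : IsConvergent M) (i : Fin (r + 1)) :
    ∃ a, a ∈ Jhat (diagBlock M i) := by
  by_contra h
  push_neg at h
  have hall : ∀ a, ∑ b, diagBlock M i a b = 1 := fun a =>
    le_antisymm (le_trans (block_rowsum_le M hM i a) (hM.2 _)) (not_lt.mp (h a))
  have hpows : ∀ k (a : Fin (nsz i)), ∑ b, ((diagBlock M i) ^ k) a b = 1 := by
    intro k
    induction k with
    | zero => intro a; simp [Matrix.one_apply]
    | succ k IH =>
      intro a
      rw [pow_succ']
      calc ∑ b, (diagBlock M i * (diagBlock M i) ^ k) a b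
          = ∑ b, ∑ c, diagBlock M i a c * ((diagBlock M i) ^ k) c b := by
            simp [Matrix.mul_apply]
        _ = ∑ c, diagBlock M i a c * ∑ b, ((diagBlock M i) ^ k) c b := by
            rw [Finset.sum_comm]; simp [Finset.mul_sum]
        _ = 1 := by simp [IH, hall]
  have ha : Fin (nsz i) := ⟨0, hnsz i⟩
  have htend : Tendsto (fun k : ℕ => ∑ b, (M ^ k) ⟨i, ha⟩ ⟨i, b⟩) atTop (nhds 0) := by
    have h0 : Tendsto (fun k : ℕ => ∑ b, (M ^ k) ⟨i, ha⟩ ⟨i, b⟩) atTop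
        (nhds (∑ _b : Fin (nsz i), (0 : ℝ))) := by
      apply tendsto_finset_sum
      intro b _
      have hcont := ((continuous_apply (⟨i, b⟩ : Σ j, Fin (nsz j))).comp
        (continuous_apply (⟨i, ha⟩ : Σ j, Fin (nsz j)))).tendsto
        (0 : Matrix (Σ j, Fin (nsz j)) (Σ j, Fin (nsz j)) ℝ)
      exact hcont.comp hconv
    simpa using h0
  have heq1 : (fun k : ℕ => ∑ b, (M ^ k) ⟨i, ha⟩ ⟨i, b⟩) = fun _ => (1 : ℝ) := by
    funext k
    rw [Finset.sum_congr rfl fun b _ => pow_block M htri i k ha b]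
    exact hpows k ha
  rw [heq1] at htend
  exact one_ne_zero (tendsto_nhds_unique tendsto_const_nhds htend)

end Blocks

theorem stmt6 {r : ℕ} (nsz : Fin (r + 1) → ℕ) (hnsz : ∀ i, 0 < nsz i)
    (M : Matrix (Σ i, Fin (nsz i)) (Σ i, Fin (nsz i)) ℝ)
    (hM : IsSubstochastic M)
    (htri : ∀ a b : Σ i, Fin (nsz i), b.1 < a.1 → M a b = 0)
    (hblocks : ∀ i, IsIrreducibleMat (diagBlock M i) ∨
      (nsz i = 1 ∧ diagBlock M i = 0))
    (hconv : IsConvergent M) :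
    (⨆ i, conHat (diagBlock M i)) ≤ conHat M ∧
      conHat M ≤ (∑ i ∈ Finset.univ.erase (Fin.last r), nsz i : ℕ) +
        conHat (diagBlock M (Fin.last r)) := by
  constructor
  · -- lower bound
    refine iSup_le fun i => ?_
    have claim1 : ∀ ℓ : ℕ, ∀ a : Fin (nsz i), a ∉ Jhat (diagBlock M i) →
        IsWalkTo M ⟨i, a⟩ (Jhat M) ℓ →
        ∃ ℓ' ≤ ℓ, IsWalkTo (diagBlock M i) a (Jhat (diagBlock M i)) ℓ' := by
      intro ℓ
      induction ℓ using Nat.strong_induction_on with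
      | _ ℓ IH =>
        intro a ha hwalk
        obtain ⟨h1, w, hw0, hwe, hwS⟩ := hwalk
        have hoff := (notJ_offblock M hM ha).2
        have hedge0 : M ⟨i, a⟩ (w 1) ≠ 0 := by
          have := hwe 0 h1
          rwa [hw0] at this
        obtain ⟨j, b, hb⟩ : ∃ j b, w 1 = ⟨j, b⟩ := ⟨(w 1).1, (w 1).2, rfl⟩
        rw [hb] at hedge0
        have hji : j = i := by
          by_contra hne
          exact hedge0 (hoff ⟨j, b⟩ hne)
        subst hji
        have hedgeB : diagBlock M j a b ≠ 0 := hedge0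
        by_cases hbJ : b ∈ Jhat (diagBlock M j)
        · refine ⟨1, h1, le_refl 1, fun k => if k = 0 then a else b, by simp, ?_, by simpa⟩
          intro k hk
          have hk0 : k = 0 := by omega
          subst hk0
          simpa using hedgeB
        · have hbM : (⟨j, b⟩ : Σ k, Fin (nsz k)) ∉ Jhat M := by
            intro hmem
            have := (notJ_offblock M hM hbJ).1
            have : ∑ v, M ⟨j, b⟩ v < 1 := hmem
            linarith [(notJ_offblock M hM hbJ).1]
          have hl2 : 2 ≤ ℓ := by
            rcases Nat.lt_or_ge ℓ 2 with h | h
            · exfalso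
              have hℓ1 : ℓ = 1 := by omega
              rw [hℓ1, hb] at hwS
              exact hbM hwS
            · exact h
          have hshift : IsWalkTo M ⟨j, b⟩ (Jhat M) (ℓ - 1) := by
            refine ⟨by omega, fun k => w (k + 1), by simpa using hb, ?_, ?_⟩
            · intro k hk
              exact hwe (k + 1) (by omega)
            · show w (ℓ - 1 + 1) ∈ Jhat M
              rw [show ℓ - 1 + 1 = ℓ from by omega]
              exact hwS
          obtain ⟨ℓ'', hle'', hwb⟩ := IH (ℓ - 1) (by omega) b hbJ hshift
          have happ := walk_append (diagBlock M j) (i := a) (j := b) (e := 1)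
            (fun k => if k = 0 then a else b) (by simp) (by simp)
            (fun k hk => by
              have hk0 : k = 0 := by omega
              subst hk0
              simpa using hedgeB) hwb
          exact ⟨1 + ℓ'', by omega, happ⟩
    refine iSup₂_le fun a ha => ?_
    have ha' : a ∉ Jhat (diagBlock M i) := ha
    have hvM : (⟨i, a⟩ : Σ j, Fin (nsz j)) ∉ Jhat M := by
      intro hmem
      have h1 : ∑ v, M ⟨i, a⟩ v < 1 := hmem
      linarith [(notJ_offblock M hM ha').1]
    calc (⨅ ℓ ∈ {ℓ : ℕ | IsWalkTo (diagBlock M i) a (Jhat (diagBlock M i)) ℓ}, (ℓ : ℕ∞))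
        ≤ ⨅ ℓ ∈ {ℓ : ℕ | IsWalkTo M ⟨i, a⟩ (Jhat M) ℓ}, (ℓ : ℕ∞) := by
          refine le_iInf₂ fun ℓ hℓ => ?_
          obtain ⟨ℓ', hle, hw⟩ := claim1 ℓ a ha' hℓ
          exact le_trans (iInf₂_le ℓ' hw) (by exact_mod_cast hle)
      _ ≤ conHat M := le_iSup₂ (f := fun (v : Σ j, Fin (nsz j)) (_ : v ∈ (Jhat M)ᶜ) =>
          ⨅ ℓ ∈ {ℓ : ℕ | IsWalkTo M v (Jhat M) ℓ}, (ℓ : ℕ∞)) ⟨i, a⟩ hvM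
  · -- upper bound
    rcases eq_or_ne (conHat (diagBlock M (Fin.last r))) ⊤ with hc | hc
    · rw [hc]
      simp
    obtain ⟨c', hc''⟩ := WithTop.ne_top_iff_exists.mp hc
    have hc' : (c' : ℕ∞) = conHat (diagBlock M (Fin.last r)) := by exact_mod_cast hc''
    have hlast : ∀ a : Fin (nsz (Fin.last r)),
        (⟨Fin.last r, a⟩ : Σ j, Fin (nsz j)) ∉ Jhat M →
        ∃ ℓ ≤ c', IsWalkTo M ⟨Fin.last r, a⟩ (Jhat M) ℓ := by
      intro a haM
      have haB : a ∉ Jhat (diagBlock M (Fin.last r)) := by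
        intro h
        apply haM
        show ∑ v, M ⟨Fin.last r, a⟩ v < 1
        rw [last_rowsum M htri a]
        exact h
      have hinf : (⨅ ℓ ∈ {ℓ : ℕ | IsWalkTo (diagBlock M (Fin.last r)) a
          (Jhat (diagBlock M (Fin.last r))) ℓ}, (ℓ : ℕ∞)) ≤ (c' : ℕ∞) := by
        rw [hc']
        exact le_iSup₂ (f := fun (v : Fin (nsz (Fin.last r)))
          (_ : v ∈ (Jhat (diagBlock M (Fin.last r)))ᶜ) =>
          ⨅ ℓ ∈ {ℓ : ℕ | IsWalkTo (diagBlock M (Fin.last r)) v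
            (Jhat (diagBlock M (Fin.last r))) ℓ}, (ℓ : ℕ∞)) a haB
      have hex : ∃ ℓ ∈ {ℓ : ℕ | IsWalkTo (diagBlock M (Fin.last r)) a
          (Jhat (diagBlock M (Fin.last r))) ℓ}, ℓ ≤ c' := by
        by_contra hno
        push_neg at hno
        have hge : ((c' + 1 : ℕ) : ℕ∞) ≤ ⨅ ℓ ∈ {ℓ : ℕ | IsWalkTo (diagBlock M (Fin.last r)) a
            (Jhat (diagBlock M (Fin.last r))) ℓ}, (ℓ : ℕ∞) := by
          refine le_iInf₂ fun ℓ hℓ => ?_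
          have := hno ℓ hℓ
          exact_mod_cast by omega
        have h2 := le_trans hge hinf
        have h3 : c' + 1 ≤ c' := by exact_mod_cast h2
        omega
      obtain ⟨ℓ, hℓS, hℓc⟩ := hex
      obtain ⟨h1, w, hw0, hwe, hwS⟩ := hℓS
      refine ⟨ℓ, hℓc, h1, fun k => ⟨Fin.last r, w k⟩,
        show (⟨Fin.last r, w 0⟩ : Σ j, Fin (nsz j)) = ⟨Fin.last r, a⟩ by rw [hw0],
        fun k hk => hwe k hk, ?_⟩
      show ∑ v, M ⟨Fin.last r, w ℓ⟩ v < 1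
      rw [last_rowsum M htri]
      exact hwS
    have claim2 : ∀ d : ℕ, ∀ i : Fin (r + 1), r - i.val ≤ d → ∀ a : Fin (nsz i),
        (⟨i, a⟩ : Σ j, Fin (nsz j)) ∉ Jhat M →
        ∃ ℓ, IsWalkTo M ⟨i, a⟩ (Jhat M) ℓ ∧
          ℓ ≤ (∑ j ∈ Finset.univ.filter (fun j => i ≤ j ∧ j ≠ Fin.last r), nsz j) + c' := by
      intro d
      induction d with
      | zero =>
        intro i hi a haM
        have hilast : i = Fin.last r := Fin.ext (by have := i.isLt; simp [Fin.last]; omega)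
        subst hilast
        obtain ⟨ℓ, hℓ, hw⟩ := hlast a haM
        exact ⟨ℓ, hw, le_trans hℓ (Nat.le_add_left _ _)⟩
      | succ d IHd =>
        intro i hi a haM
        by_cases hilast : i = Fin.last r
        · subst hilast
          obtain ⟨ℓ, hℓ, hw⟩ := hlast a haM
          exact ⟨ℓ, hw, le_trans hℓ (Nat.le_add_left _ _)⟩
        have hival : i.val < r := by
          have h1 := i.isLt
          have h2 : i.val ≠ r := fun h => hilast (Fin.ext (by simp [Fin.last]; omega))
          omega
        have hstepA : ∃ e ≤ nsz i - 1, ∃ w : ℕ → Fin (nsz i), w 0 = a ∧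
            (∀ k < e, diagBlock M i (w k) (w (k + 1)) ≠ 0) ∧
            w e ∈ Jhat (diagBlock M i) := by
          by_cases haB : a ∈ Jhat (diagBlock M i)
          · exact ⟨0, Nat.zero_le _, fun _ => a, rfl, fun k hk => absurd hk (by omega), haB⟩
          · have hirr : IsIrreducibleMat (diagBlock M i) := by
              rcases hblocks i with h | ⟨_, h0⟩
              · exact h
              · exfalso
                apply haB
                show ∑ b, diagBlock M i a b < 1
                rw [h0]
                simp
            obtain ⟨u0, hu0⟩ := jhat_block_nonempty M hM hnsz htri hconv i
            obtain ⟨ℓ0, hℓ0, w0, hw00, hw0e, hw0edges⟩ := hirr a u0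
            have hW : IsWalkTo (diagBlock M i) a (Jhat (diagBlock M i)) ℓ0 :=
              ⟨hℓ0, w0, hw00, hw0edges, hw0e ▸ hu0⟩
            obtain ⟨e, hecard, he⟩ := walk_shorten (diagBlock M i) haB ℓ0 hW
            obtain ⟨he1, w, hw0, hwe, hwS⟩ := he
            exact ⟨e, by simpa [Fintype.card_fin] using hecard, w, hw0, hwe, hwS⟩
        obtain ⟨e, hele, w, hwa0, hwedges, hwJ⟩ := hstepA
        have hmemi : i ∈ Finset.univ.filter (fun j => i ≤ j ∧ j ≠ Fin.last r) := by
          simp [hilast]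
        have hnle : nsz i ≤ ∑ j ∈ Finset.univ.filter
            (fun j => i ≤ j ∧ j ≠ Fin.last r), nsz j :=
          Finset.single_le_sum (fun _ _ => Nat.zero_le _) hmemi
        have hni := hnsz i
        by_cases huM : (⟨i, w e⟩ : Σ j, Fin (nsz j)) ∈ Jhat M
        · have he1 : 1 ≤ e := by
            rcases Nat.eq_zero_or_pos e with h | h
            · exfalso
              rw [h, hwa0] at huM
              exact haM huM
            · exact h
          refine ⟨e, ⟨he1, fun k => ⟨i, w k⟩,
            show (⟨i, w 0⟩ : Σ j, Fin (nsz j)) = ⟨i, a⟩ by rw [hwa0],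
            fun k hk => hwedges k hk, huM⟩, ?_⟩
          omega
        · have huB : w e ∈ Jhat (diagBlock M i) := hwJ
          have hrow : ¬ (∑ v, M ⟨i, w e⟩ v < 1) := huM
          have hout : ∃ v : Σ j, Fin (nsz j), v.1 ≠ i ∧ M ⟨i, w e⟩ v ≠ 0 := by
            by_contra hno
            push_neg at hno
            apply hrow
            rw [rowsum_split]
            calc ∑ j, ∑ b, M ⟨i, w e⟩ ⟨j, b⟩
                = ∑ b, diagBlock M i (w e) b :=
                  Finset.sum_eq_single i
                    (fun j _ hj => Finset.sum_eq_zero fun b _ => hno ⟨j, b⟩ hj) (by simp)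
              _ < 1 := huB
          obtain ⟨v', hv1, hv0⟩ := hout
          obtain ⟨j, b, hb⟩ : ∃ j b, v' = ⟨j, b⟩ := ⟨v'.1, v'.2, rfl⟩
          subst hb
          have hji : j ≠ i := hv1
          have hij : i < j := by
            rcases lt_trichotomy i j with h | h | h
            · exact h
            · exact absurd h.symm hji
            · exact absurd (htri ⟨i, w e⟩ ⟨j, b⟩ h) hv0
          by_cases hbM : (⟨j, b⟩ : Σ k, Fin (nsz k)) ∈ Jhat M
          · have hEdgeWalk : IsWalkTo M ⟨i, w e⟩ (Jhat M) 1 := by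
              refine ⟨le_refl 1, fun k => if k = 0 then ⟨i, w e⟩ else ⟨j, b⟩, by simp, ?_,
                by simpa using hbM⟩
              intro k hk
              have hk0 : k = 0 := by omega
              subst hk0
              simpa using hv0
            have hFull := walk_append M (i := ⟨i, a⟩) (j := ⟨i, w e⟩) (e := e)
              (fun k => (⟨i, w k⟩ : Σ j, Fin (nsz j)))
              (show (⟨i, w 0⟩ : Σ j, Fin (nsz j)) = ⟨i, a⟩ by rw [hwa0]) rfl
              (fun k hk => hwedges k hk) hEdgeWalk
            refine ⟨e + 1, hFull, ?_⟩
            omega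
          · have hjd : r - j.val ≤ d := by
              have hij' : i.val < j.val := hij
              have := j.isLt
              omega
            obtain ⟨ℓ2, hw2, hb2⟩ := IHd j hjd b hbM
            have hEdge : IsWalkTo M ⟨i, w e⟩ (Jhat M) (1 + ℓ2) := by
              refine walk_append M (i := ⟨i, w e⟩) (j := ⟨j, b⟩) (e := 1)
                (fun k => if k = 0 then (⟨i, w e⟩ : Σ j, Fin (nsz j))
                else ⟨j, b⟩) (by simp) (by simp) ?_ hw2
              intro k hk
              have hk0 : k = 0 := by omega
              subst hk0
              simpa using hv0
            have hFull := walk_append M (i := ⟨i, a⟩) (j := ⟨i, w e⟩) (e := e)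
              (fun k => (⟨i, w k⟩ : Σ j, Fin (nsz j)))
              (show (⟨i, w 0⟩ : Σ j, Fin (nsz j)) = ⟨i, a⟩ by rw [hwa0]) rfl
              (fun k hk => hwedges k hk) hEdge
            refine ⟨e + (1 + ℓ2), hFull, ?_⟩
            have hiSj : i ∉ Finset.univ.filter (fun k => j ≤ k ∧ k ≠ Fin.last r) := by
              simp only [Finset.mem_filter, Finset.mem_univ, true_and, not_and]
              intro hle
              exact absurd hle (not_le.mpr hij)
            have hsub : insert i (Finset.univ.filter (fun k => j ≤ k ∧ k ≠ Fin.last r)) ⊆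
                Finset.univ.filter (fun k => i ≤ k ∧ k ≠ Fin.last r) := by
              intro k hk
              simp only [Finset.mem_insert, Finset.mem_filter, Finset.mem_univ, true_and] at *
              rcases hk with h | ⟨h1, h2⟩
              · exact ⟨h ▸ le_refl i, h ▸ hilast⟩
              · exact ⟨le_trans (le_of_lt hij) h1, h2⟩
            have hsum : nsz i + ∑ k ∈ Finset.univ.filter
                (fun k => j ≤ k ∧ k ≠ Fin.last r), nsz k ≤
                ∑ k ∈ Finset.univ.filter (fun k => i ≤ k ∧ k ≠ Fin.last r), nsz k := by
              rw [← Finset.sum_insert hiSj]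
              exact Finset.sum_le_sum_of_subset hsub
            omega
    refine iSup₂_le fun v hv => ?_
    obtain ⟨i, a⟩ := v
    obtain ⟨ℓ, hw, hb⟩ := claim2 r i (by omega) a hv
    refine le_trans (iInf₂_le ℓ hw) ?_
    have hfs : (∑ j ∈ Finset.univ.filter (fun j => i ≤ j ∧ j ≠ Fin.last r), nsz j) ≤
        ∑ k ∈ Finset.univ.erase (Fin.last r), nsz k := by
      refine Finset.sum_le_sum_of_subset fun k hk => ?_
      rw [Finset.mem_filter] at hk
      exact Finset.mem_erase.mpr ⟨hk.2.2, Finset.mem_univ k⟩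
    have hb2 : ℓ ≤ (∑ k ∈ Finset.univ.erase (Fin.last r), nsz k) + c' := by omega
    rw [← hc']
    calc (ℓ : ℕ∞) ≤ (((∑ k ∈ Finset.univ.erase (Fin.last r), nsz k) + c' : ℕ) : ℕ∞) :=
          Nat.cast_le.mpr hb2
      _ = ((∑ k ∈ Finset.univ.erase (Fin.last r), nsz k : ℕ) : ℕ∞) + (c' : ℕ∞) :=
          Nat.cast_add _ _
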